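/- Let μ ∈ M(m) satisfy property P, and define μ̄ on S×S×S by μ̄(t',s,t) = μ(s,t)·p(t|t')·m(t')/m(t). Then μ̄ is a probability distribution on S×S×S and: (1) the marginal of μ̄ on the second and third coordinates equals μ; (2) the marginal of μ̄ on the first and third coordinates is (t',t) ↦ m(t')·p(t|t'); (3) the marginal of μ̄ on the first and second coordinates satisfies μ̄_{1,2}(t',s') = Σ_{s∈S} μ(s,t')·p(s'|s) for all t',s'; (4) whenever m(t')·p(t|t') > 0, the conditional law of the second coordinate given that the first and third coordinates equal (t',t) is μ̄(s|t',t) = μ(s,t)/m(t). -/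

import Mathlib

/-- `μ` is a probability distribution on `S × S` whose two marginals both equal `m`. -/
def IsCopula {S : Type*} [Fintype S] (m : S → ℝ) (μ : S × S → ℝ) : Prop :=
  (∀ q, 0 ≤ μ q) ∧ (∑ q : S × S, μ q = 1) ∧
    (∀ s, ∑ a, μ (s, a) = m s) ∧ (∀ a, ∑ s, μ (s, a) = m a)

/- Here `p s s'` denotes the transition probability `p(s' | s)` of moving from `s` to `s'`,
and `μbar (t', s, t)` is the measure `μ̄(t',s,t) = μ(s,t)·p(t|t')·m(t')/m(t)`. -/
theorem stmt7 {S : Type*} [Fintype S] [Nonempty S]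
    (p : S → S → ℝ) (hp0 : ∀ s s', 0 ≤ p s s') (hp1 : ∀ s, ∑ s', p s s' = 1)
    (m : S → ℝ) (hm : ∀ s, 0 < m s) (hm1 : ∑ s, m s = 1)
    (hstat : ∀ s', ∑ s, m s * p s s' = m s')
    (μ : S × S → ℝ) (hμ : IsCopula m μ)
    (hP : ∀ s' t : S, ∑ s, μ (s, t) / m t * p s s' = ∑ t', μ (s', t') / m t' * p t t')
    (μbar : S × S × S → ℝ)
    (hμbar : ∀ t' s t : S, μbar (t', s, t) = μ (s, t) * p t' t * m t' / m t) :
    (∀ q, 0 ≤ μbar q) ∧ (∑ q : S × S × S, μbar q = 1) ∧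
      (∀ s t : S, ∑ t', μbar (t', s, t) = μ (s, t)) ∧
      (∀ t' t : S, ∑ s, μbar (t', s, t) = m t' * p t' t) ∧
      (∀ t' s' : S, ∑ t, μbar (t', s', t) = ∑ s, μ (s, t') * p s s') ∧
      (∀ t' s t : S, 0 < m t' * p t' t →
        μbar (t', s, t) / (m t' * p t' t) = μ (s, t) / m t) := by
  obtain ⟨hμ0, hμ1, hμm1, hμm2⟩ := hμ
  have h23 : ∀ s t : S, ∑ t', μbar (t', s, t) = μ (s, t) := by
    intro s t
    have : ∑ t', μbar (t', s, t) = (μ (s, t) / m t) * ∑ t', m t' * p t' t := by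
      rw [Finset.mul_sum]
      refine Finset.sum_congr rfl fun t' _ => ?_
      rw [hμbar]; ring
    rw [this, hstat t, div_mul_eq_mul_div, mul_div_assoc,
      div_self (hm t).ne', mul_one]
  refine ⟨?_, ?_, h23, ?_, ?_, ?_⟩
  · rintro ⟨t', s, t⟩
    rw [hμbar]
    exact div_nonneg (mul_nonneg (mul_nonneg (hμ0 (s, t)) (hp0 t' t)) (hm t').le) (hm t).le
  · rw [Fintype.sum_prod_type, Finset.sum_comm]
    rw [show (∑ q : S × S, ∑ t' : S, μbar (t', q.1, q.2)) = ∑ q : S × S, μ q from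
      Finset.sum_congr rfl fun q _ => h23 q.1 q.2]
    exact hμ1
  · intro t' t
    have : ∑ s, μbar (t', s, t) = (∑ s, μ (s, t)) * (p t' t * m t' / m t) := by
      rw [Finset.sum_mul]
      refine Finset.sum_congr rfl fun s _ => ?_
      rw [hμbar]; ring
    rw [this, hμm2 t]
    have h2 : m t ≠ 0 := (hm t).ne'
    field_simp
  · intro t' s'
    have h1 : ∑ t, μbar (t', s', t) = m t' * ∑ t, μ (s', t) / m t * p t' t := by
      rw [Finset.mul_sum]
      refine Finset.sum_congr rfl fun t _ => ?_
      rw [hμbar]; ring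
    rw [h1, ← hP s' t', Finset.mul_sum]
    refine Finset.sum_congr rfl fun s _ => ?_
    have h1 : m t' ≠ 0 := (hm t').ne'
    field_simp
  · intro t' s t h
    rw [hμbar]
    have h1 : m t' ≠ 0 := (hm t').ne'
    have h2 : m t ≠ 0 := (hm t).ne'
    have h3 : p t' t ≠ 0 := by
      rcases mul_pos_iff.mp h with ⟨_, h⟩ | ⟨h, _⟩
      · exact h.ne'
      · exact absurd h1 (not_ne_iff.mpr (by linarith [hm t']))
    field_simp
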